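/- Let X be a topological space, f : 𝕋 × X → GLₙ(ℂ) continuous such that for each x ∈ X the function f(·,x) admits a canonical factorization that can be chosen continuously in x on a neighborhood of each point (local continuous canonical factorizations). Then there is a unique continuous map fᵉ : 𝔻² × X → GLₙ(ℂ) extending f such that on each neighborhood U with continuous factorization f = f₋ f₊, fᵉ(z,x) = f₋ᵉ(z̄⁻¹,x) f₊ᵉ(z,x). -/

import Mathlib

open Metric

/-- A canonical (right) factorization `f = f₋ f₊` of a nonsingular matrix function on the
unit circle.  The factor `f₊` extends continuously and invertibly to the closed unit disk,
analytically on the open disk; the factor `f₋` extends continuously and invertibly to the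
closed exterior disk including `∞`.  We encode the exterior extension `f₋ᵉ` via the map
`Fm : 𝔻² → GLₙ(ℂ)`, `Fm w = f₋ᵉ(w⁻¹)` (so `Fm 0 = f₋ᵉ(∞)`), which is continuous on the
closed unit disk, analytic on the open disk, and invertible-valued. -/
structure CanonicalFactorization (n : ℕ) (f : ℂ → Matrix (Fin n) (Fin n) ℂ) : Type where
  Fm : ℂ → Matrix (Fin n) (Fin n) ℂ
  Fp : ℂ → Matrix (Fin n) (Fin n) ℂ
  contOn_m : ContinuousOn Fm (closedBall 0 1)
  contOn_p : ContinuousOn Fp (closedBall 0 1)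
  anal_m : ∀ i j, DifferentiableOn ℂ (fun z => Fm z i j) (ball 0 1)
  anal_p : ∀ i j, DifferentiableOn ℂ (fun z => Fp z i j) (ball 0 1)
  unit_m : ∀ z ∈ closedBall (0 : ℂ) 1, IsUnit (Fm z)
  unit_p : ∀ z ∈ closedBall (0 : ℂ) 1, IsUnit (Fp z)
  factor : ∀ z ∈ sphere (0 : ℂ) 1, f z = Fm z⁻¹ * Fp z


local notation "conj'" => starRingEnd ℂ

/-- conj ∘ v ∘ conj is holomorphic when v is. -/
lemma hasDerivAt_conj_comp {v : ℂ → ℂ} {w d : ℂ} (hv : HasDerivAt v d w) :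
    HasDerivAt (fun z => conj' (v (conj' z))) (conj' d) (conj' w) := by
  rw [hasDerivAt_iff_tendsto_slope] at hv ⊢
  have hconj : Filter.Tendsto (fun z : ℂ => conj' z) (nhdsWithin (conj' w) {conj' w}ᶜ)
      (nhdsWithin w {w}ᶜ) := by
    rw [tendsto_nhdsWithin_iff]
    constructor
    · exact ((Complex.continuous_conj.tendsto _).mono_left nhdsWithin_le_nhds).congr
        (fun z => rfl) |>.congr' (by simp) |>.mono_right (le_of_eq (by rw [Complex.conj_conj]))
    · filter_upwards [self_mem_nhdsWithin] with z hz
      simp only [Set.mem_compl_iff, Set.mem_singleton_iff] at hz ⊢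
      intro h; exact hz (by simpa using congrArg conj' h)
  have : (fun z => slope (fun z => conj' (v (conj' z))) (conj' w) z)
      = (fun z => conj' (slope v w (conj' z))) := by
    funext z
    simp only [slope_def_field, div_eq_mul_inv, map_mul, map_sub, map_inv₀, Complex.conj_conj]
  have h2 : slope (fun z => conj' (v (conj' z))) (conj' w)
      = (fun z => conj' (slope v w (conj' z))) := this
  rw [h2]
  exact (Complex.continuous_conj.tendsto d).comp (hv.comp hconj)

lemma im_zero_on_closedBall {F : ℂ → ℂ} (hd : DifferentiableOn ℂ F (ball 0 1))
    (hc : ContinuousOn F (closedBall 0 1)) (him : ∀ z ∈ sphere (0:ℂ) 1, (F z).im = 0) :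
    ∀ z ∈ closedBall (0:ℂ) 1, (F z).im = 0 := by
  have hcl : closure (ball (0:ℂ) 1) = closedBall 0 1 := closure_ball 0 one_ne_zero
  have hfr : frontier (ball (0:ℂ) 1) = sphere 0 1 := frontier_ball 0 one_ne_zero
  have key : ∀ s : ℂ, (∀ z ∈ sphere (0:ℂ) 1, ((s * F z).re) = 0) →
      ∀ z ∈ closedBall (0:ℂ) 1, Real.exp ((s * F z).re) ≤ 1 := by
    intro s hs z hz
    have hG : DiffContOnCl ℂ (fun z => Complex.exp (s * F z)) (ball 0 1) := by
      refine ⟨(hd.const_mul s).cexp, ?_⟩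
      rw [hcl]
      exact ((hc.const_smul s).congr (fun z _ => rfl)).cexp
    have := Complex.norm_le_of_forall_mem_frontier_norm_le isBounded_ball hG
      (C := 1) (fun w hw => ?_) (by rw [hcl]; exact hz)
    · simpa [Complex.norm_exp] using this
    · rw [hfr] at hw
      rw [Complex.norm_exp, hs w hw]; simp
  intro z hz
  have h1 := key Complex.I (fun w hw => by simp [him w hw]) z hz
  have h2 := key (-Complex.I) (fun w hw => by simp [him w hw]) z hz
  simp only [Complex.mul_re, Complex.I_re, Complex.I_im, Complex.neg_re, Complex.neg_im] at h1 h2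
  have e1 : Real.exp (-(F z).im) ≤ 1 := by simpa using h1
  have e2 : Real.exp ((F z).im) ≤ 1 := by simpa using h2
  have := Real.exp_le_one_iff.mp e1
  have := Real.exp_le_one_iff.mp e2
  linarith

lemma const_of_im_zero_on_sphere {F : ℂ → ℂ} (hd : DifferentiableOn ℂ F (ball 0 1))
    (hc : ContinuousOn F (closedBall 0 1)) (him : ∀ z ∈ sphere (0:ℂ) 1, (F z).im = 0) :
    ∀ z ∈ closedBall (0:ℂ) 1, F z = F 1 := by
  have hcl : closure (ball (0:ℂ) 1) = closedBall 0 1 := closure_ball 0 one_ne_zero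
  have him' := im_zero_on_closedBall hd hc him
  -- the function G = exp(I F) has constant norm 1 on the closed ball
  have hG : DiffContOnCl ℂ (fun z => Complex.exp (Complex.I * F z)) (ball 0 1) := by
    refine ⟨(hd.const_mul Complex.I).cexp, ?_⟩
    rw [hcl]
    exact ((hc.const_smul Complex.I).congr (fun z _ => rfl)).cexp
  have hnorm : ∀ z ∈ closedBall (0:ℂ) 1, ‖Complex.exp (Complex.I * F z)‖ = 1 := by
    intro z hz
    simp [Complex.norm_exp, Complex.mul_re, him' z hz]
  have hmax : IsMaxOn (norm ∘ fun z => Complex.exp (Complex.I * F z)) (ball (0:ℂ) 1) 0 := by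
    intro z hz
    simp only [Function.comp_apply, Set.mem_setOf_eq]
    rw [hnorm z (ball_subset_closedBall hz), hnorm 0 (ball_subset_closedBall (mem_ball_self one_pos))]
  have heq := Complex.eqOn_closure_of_isPreconnected_of_isMaxOn_norm
    (convex_ball (0:ℂ) 1).isPreconnected isOpen_ball hG (mem_ball_self one_pos) hmax
  rw [hcl] at heq
  -- hence for each z in the closed ball, F z - F 1 is an integer multiple of 2π
  have hone : (1:ℂ) ∈ closedBall (0:ℂ) 1 := by simp
  have hint : ∀ z ∈ closedBall (0:ℂ) 1, ∃ m : ℤ, (F z).re = (F 1).re + m * (2 * Real.pi) := by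
    intro z hz
    have h1 : Complex.exp (Complex.I * F z) = Complex.exp (Complex.I * F 1) := by
      have e1 := heq hz
      have e2 := heq hone
      simp only [Function.const] at e1 e2
      rw [e1, e2]
    rw [Complex.exp_eq_exp_iff_exists_int] at h1
    obtain ⟨m, hm⟩ := h1
    refine ⟨m, ?_⟩
    have : F z = F 1 + m * (2 * Real.pi) := by
      apply mul_left_cancel₀ Complex.I_ne_zero
      rw [hm]; ring
    have := congrArg Complex.re this
    simpa using this
  -- intermediate value argument: the multiple must be 0
  intro z hz
  obtain ⟨m, hm⟩ := hint z hz
  have hre : (F z).re = (F 1).re := by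
    rcases lt_trichotomy ((F z).re) ((F 1).re) with hlt | heq' | hgt
    · exfalso
      have hmlt : (m : ℝ) ≤ -1 := by
        have : (m : ℝ) * (2 * Real.pi) < 0 := by linarith
        have hneg : m < 0 := by
          by_contra h
          push_neg at h
          have : (0:ℝ) ≤ (m:ℝ) * (2 * Real.pi) :=
            mul_nonneg (by exact_mod_cast h) (by positivity)
          linarith
        have h1 : m ≤ -1 := by omega
        exact_mod_cast h1
      -- (F 1).re - π ∈ Icc (F z).re (F 1).re
      have hmem : ((F 1).re - Real.pi) ∈ Set.Icc ((F z).re) ((F 1).re) := by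
        constructor
        · rw [hm]
          nlinarith [Real.pi_pos]
        · linarith [Real.pi_pos]
      have hIcc := (convex_closedBall (0:ℂ) 1).isPreconnected.intermediate_value hz hone
        ((Complex.continuous_re.comp_continuousOn hc))
      obtain ⟨w, hw, hw2⟩ := hIcc hmem
      obtain ⟨k, hk⟩ := hint w hw
      simp only [Function.comp_apply] at hw2
      rw [hw2] at hk
      have : Real.pi * (2 * k + 1) = 0 := by push_cast at hk ⊢; linarith
      rcases mul_eq_zero.mp this with h | h
      · exact Real.pi_ne_zero h
      · have : (2*k+1 : ℝ) = 0 := h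
        have : (2*k+1 : ℤ) = 0 := by exact_mod_cast this
        omega
    · exact heq'
    · exfalso
      have hmgt : (1:ℝ) ≤ (m : ℝ) := by
        have : (0:ℝ) < (m:ℝ) * (2 * Real.pi) := by linarith
        have hpos : 0 < m := by
          by_contra h
          push_neg at h
          have : (m:ℝ) * (2 * Real.pi) ≤ 0 :=
            mul_nonpos_of_nonpos_of_nonneg (by exact_mod_cast h) (by positivity)
          linarith
        have h1 : (1:ℤ) ≤ m := hpos
        exact_mod_cast h1
      have hmem : ((F 1).re + Real.pi) ∈ Set.Icc ((F 1).re) ((F z).re) := by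
        constructor
        · linarith [Real.pi_pos]
        · rw [hm]; nlinarith [Real.pi_pos]
      have hIcc := (convex_closedBall (0:ℂ) 1).isPreconnected.intermediate_value hone hz
        ((Complex.continuous_re.comp_continuousOn hc))
      obtain ⟨w, hw, hw2⟩ := hIcc hmem
      obtain ⟨k, hk⟩ := hint w hw
      simp only [Function.comp_apply] at hw2
      rw [hw2] at hk
      have : Real.pi * (2 * k - 1) = 0 := by push_cast at hk ⊢; linarith
      rcases mul_eq_zero.mp this with h | h
      · exact Real.pi_ne_zero h
      · have : (2*k-1 : ℝ) = 0 := h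
        have : (2*k-1 : ℤ) = 0 := by exact_mod_cast this
        omega
  have h1s : (1:ℂ) ∈ sphere (0:ℂ) 1 := by simp
  apply Complex.ext
  · exact hre
  · rw [him' z hz, him' 1 hone]


lemma two_sided_const {u v : ℂ → ℂ}
    (hud : DifferentiableOn ℂ u (ball 0 1)) (huc : ContinuousOn u (closedBall 0 1))
    (hvd : DifferentiableOn ℂ v (ball 0 1)) (hvc : ContinuousOn v (closedBall 0 1))
    (hrel : ∀ z ∈ sphere (0:ℂ) 1, u (conj' z) = v z) :
    ∀ z ∈ closedBall (0:ℂ) 1, ∀ w ∈ closedBall (0:ℂ) 1, u z = v w := by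
  set B : ℂ → ℂ := fun z => conj' (v (conj' z)) with hB
  have hconj_ball : ∀ z : ℂ, z ∈ ball (0:ℂ) 1 → conj' z ∈ ball (0:ℂ) 1 := by
    intro z hz; simpa [mem_ball_zero_iff] using mem_ball_zero_iff.mp hz
  have hconj_cb : ∀ z : ℂ, z ∈ closedBall (0:ℂ) 1 → conj' z ∈ closedBall (0:ℂ) 1 := by
    intro z hz; simpa [mem_closedBall_zero_iff] using mem_closedBall_zero_iff.mp hz
  have hconj_sph : ∀ z : ℂ, z ∈ sphere (0:ℂ) 1 → conj' z ∈ sphere (0:ℂ) 1 := by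
    intro z hz; simpa [mem_sphere_zero_iff_norm] using mem_sphere_zero_iff_norm.mp hz
  have hBd : DifferentiableOn ℂ B (ball 0 1) := by
    intro z hz
    have hz' := hconj_ball z hz
    have hv : HasDerivAt v (deriv v (conj' z)) (conj' z) :=
      (hvd.differentiableAt (isOpen_ball.mem_nhds hz')).hasDerivAt
    have h2 := hasDerivAt_conj_comp hv
    rw [Complex.conj_conj] at h2
    exact h2.differentiableAt.differentiableWithinAt
  have hBc : ContinuousOn B (closedBall 0 1) := by
    apply Complex.continuous_conj.comp_continuousOn
    exact hvc.comp Complex.continuous_conj.continuousOn (fun z hz => hconj_cb z hz)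
  have hBrel : ∀ z ∈ sphere (0:ℂ) 1, B z = conj' (u z) := by
    intro z hz
    have h3 := hrel (conj' z) (hconj_sph z hz)
    rw [Complex.conj_conj] at h3
    rw [hB]; simp only [← h3]
  have hS := const_of_im_zero_on_sphere (F := fun z => u z + B z) (hud.add hBd)
    (huc.add hBc) (fun z hz => by show (u z + B z).im = 0; rw [hBrel z hz]; simp)
  have hD := const_of_im_zero_on_sphere (F := fun z => -Complex.I * (u z - B z))
    ((hud.sub hBd).const_mul _)
    (((huc.sub hBc).const_smul (-Complex.I)).congr (fun z _ => by simp [smul_eq_mul]))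
    (fun z hz => by
      show (-Complex.I * (u z - B z)).im = 0
      rw [hBrel z hz]
      simp [Complex.mul_im, Complex.sub_re, Complex.sub_im])
  have hu_const : ∀ z ∈ closedBall (0:ℂ) 1, u z = u 1 := by
    intro z hz
    have h1 : (1:ℂ) ∈ closedBall (0:ℂ) 1 := by simp
    have e1 := hS z hz
    have e2 := hD z hz
    have : u z + B z = u 1 + B 1 := e1
    have h4 : -Complex.I * (u z - B z) = -Complex.I * (u 1 - B 1) := e2
    have h5 : u z - B z = u 1 - B 1 := by
      apply mul_left_cancel₀ (a := -Complex.I) (by simp [Complex.I_ne_zero]) h4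
    linear_combination (this + h5) / 2
  have hB_const : ∀ z ∈ closedBall (0:ℂ) 1, B z = B 1 := by
    intro z hz
    have h1 : (1:ℂ) ∈ closedBall (0:ℂ) 1 := by simp
    have e1 := hS z hz
    have e2 := hD z hz
    have h4 : -Complex.I * (u z - B z) = -Complex.I * (u 1 - B 1) := e2
    have h5 : u z - B z = u 1 - B 1 := by
      apply mul_left_cancel₀ (a := -Complex.I) (by simp [Complex.I_ne_zero]) h4
    have : u z + B z = u 1 + B 1 := e1
    linear_combination (this - h5) / 2
  intro z hz w hw
  have h1s : (1:ℂ) ∈ sphere (0:ℂ) 1 := by simp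
  have hu1v1 : u 1 = v 1 := by
    have := hrel 1 h1s
    simpa using this
  have hv_const : v w = v 1 := by
    have hcw := hconj_cb w hw
    have := hB_const (conj' w) hcw
    rw [hB] at this
    simp only [Complex.conj_conj] at this
    have h6 := congrArg conj' this
    simp only [Complex.conj_conj] at h6
    rw [h6]
    have hb1 : conj' (conj' (v (conj' 1))) = v 1 := by simp
    simp
  rw [hu_const z hz, hv_const, hu1v1]


section MatrixHelpers

variable {n : ℕ} {s : Set ℂ}

lemma det_differentiableOn {M : ℂ → Matrix (Fin n) (Fin n) ℂ}
    (h : ∀ i j, DifferentiableOn ℂ (fun z => M z i j) s) :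
    DifferentiableOn ℂ (fun z => (M z).det) s := by
  simp_rw [Matrix.det_apply']
  apply DifferentiableOn.fun_sum
  intro σ _
  apply DifferentiableOn.const_mul
  apply DifferentiableOn.fun_finset_prod
  intro i _
  exact h (σ i) i

lemma det_continuousOn {M : ℂ → Matrix (Fin n) (Fin n) ℂ}
    (h : ∀ i j, ContinuousOn (fun z => M z i j) s) :
    ContinuousOn (fun z => (M z).det) s := by
  have hM : ContinuousOn (fun z => M z) s := by
    refine continuousOn_pi.mpr ?_; intro i; rw [continuousOn_pi]; intro j; exact h i j
  exact (continuous_id.matrix_det).comp_continuousOn hM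

lemma adjugate_differentiableOn {M : ℂ → Matrix (Fin n) (Fin n) ℂ}
    (h : ∀ i j, DifferentiableOn ℂ (fun z => M z i j) s) (i j : Fin n) :
    DifferentiableOn ℂ (fun z => (M z).adjugate i j) s := by
  simp_rw [Matrix.adjugate_apply]
  apply det_differentiableOn
  intro k l
  simp_rw [Matrix.updateRow_apply]
  by_cases hkj : k = j
  · simp [hkj]
  · simp only [hkj, if_false]
    exact h k l

lemma inv_entry_differentiableOn {M : ℂ → Matrix (Fin n) (Fin n) ℂ}
    (h : ∀ i j, DifferentiableOn ℂ (fun z => M z i j) s)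
    (hu : ∀ z ∈ s, IsUnit (M z)) (i j : Fin n) :
    DifferentiableOn ℂ (fun z => (M z)⁻¹ i j) s := by
  have hdet : ∀ z ∈ s, (M z).det ≠ 0 := fun z hz =>
    IsUnit.ne_zero ((Matrix.isUnit_iff_isUnit_det _).mp (hu z hz))
  have : (fun z => (M z)⁻¹ i j) = fun z => ((M z).det)⁻¹ * (M z).adjugate i j := by
    funext z
    rw [Matrix.inv_def, Matrix.smul_apply, Ring.inverse_eq_inv, smul_eq_mul]
  rw [this]
  exact ((det_differentiableOn h).inv hdet).mul (adjugate_differentiableOn h i j)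

lemma inv_entry_continuousOn {M : ℂ → Matrix (Fin n) (Fin n) ℂ}
    (h : ∀ i j, ContinuousOn (fun z => M z i j) s)
    (hu : ∀ z ∈ s, IsUnit (M z)) (i j : Fin n) :
    ContinuousOn (fun z => (M z)⁻¹ i j) s := by
  have hdet : ∀ z ∈ s, (M z).det ≠ 0 := fun z hz =>
    IsUnit.ne_zero ((Matrix.isUnit_iff_isUnit_det _).mp (hu z hz))
  have hM : ContinuousOn (fun z => M z) s := by
    refine continuousOn_pi.mpr ?_; intro i; rw [continuousOn_pi]; intro j; exact h i j
  have hadj : ContinuousOn (fun z => (M z).adjugate i j) s := by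
    have := (continuous_id.matrix_adjugate).comp_continuousOn hM
    exact ((continuous_apply j).comp (continuous_apply i)).comp_continuousOn this
  have : (fun z => (M z)⁻¹ i j) = fun z => ((M z).det)⁻¹ * (M z).adjugate i j := by
    funext z
    rw [Matrix.inv_def, Matrix.smul_apply, Ring.inverse_eq_inv, smul_eq_mul]
  rw [this]
  exact (((det_continuousOn h).inv₀ hdet)).mul hadj

lemma mul_entry_differentiableOn {M N : ℂ → Matrix (Fin n) (Fin n) ℂ}
    (hM : ∀ i j, DifferentiableOn ℂ (fun z => M z i j) s)
    (hN : ∀ i j, DifferentiableOn ℂ (fun z => N z i j) s) (i j : Fin n) :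
    DifferentiableOn ℂ (fun z => (M z * N z) i j) s := by
  simp_rw [Matrix.mul_apply]
  exact DifferentiableOn.fun_sum (fun k _ => (hM i k).mul (hN k j))

lemma mul_entry_continuousOn {M N : ℂ → Matrix (Fin n) (Fin n) ℂ}
    (hM : ∀ i j, ContinuousOn (fun z => M z i j) s)
    (hN : ∀ i j, ContinuousOn (fun z => N z i j) s) (i j : Fin n) :
    ContinuousOn (fun z => (M z * N z) i j) s := by
  simp_rw [Matrix.mul_apply]
  apply continuousOn_finset_sum
  intro k _
  exact (hM i k).mul (hN k j)

end MatrixHelpers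



lemma key_unique {n : ℕ} {f : ℂ → Matrix (Fin n) (Fin n) ℂ}
    (c c' : CanonicalFactorization n f) :
    ∀ z ∈ closedBall (0:ℂ) 1, c.Fm (conj' z) * c.Fp z = c'.Fm (conj' z) * c'.Fp z := by
  have hconj_cb : ∀ z : ℂ, z ∈ closedBall (0:ℂ) 1 → conj' z ∈ closedBall (0:ℂ) 1 := by
    intro z hz; simpa [mem_closedBall_zero_iff] using mem_closedBall_zero_iff.mp hz
  have hball_cb : (ball (0:ℂ) 1) ⊆ closedBall 0 1 := ball_subset_closedBall
  -- entries of Fm/Fp are continuous on closed ball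
  have hcont_entry : ∀ (F : ℂ → Matrix (Fin n) (Fin n) ℂ), ContinuousOn F (closedBall 0 1) →
      ∀ i j, ContinuousOn (fun z => F z i j) (closedBall (0:ℂ) 1) := by
    intro F hF i j
    exact ((continuous_apply j).comp (continuous_apply i)).comp_continuousOn hF
  set g : ℂ → Matrix (Fin n) (Fin n) ℂ := fun w => (c'.Fm w)⁻¹ * c.Fm w with hg
  set h : ℂ → Matrix (Fin n) (Fin n) ℂ := fun z => c'.Fp z * (c.Fp z)⁻¹ with hh
  have hgd : ∀ i j, DifferentiableOn ℂ (fun w => g w i j) (ball 0 1) :=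
    fun i j => mul_entry_differentiableOn
      (inv_entry_differentiableOn c'.anal_m (fun z hz => c'.unit_m z (hball_cb hz)))
      c.anal_m i j
  have hgc : ∀ i j, ContinuousOn (fun w => g w i j) (closedBall 0 1) :=
    fun i j => mul_entry_continuousOn
      (inv_entry_continuousOn (hcont_entry _ c'.contOn_m) c'.unit_m)
      (hcont_entry _ c.contOn_m) i j
  have hhd : ∀ i j, DifferentiableOn ℂ (fun z => h z i j) (ball 0 1) :=
    fun i j => mul_entry_differentiableOn c'.anal_p
      (inv_entry_differentiableOn c.anal_p (fun z hz => c.unit_p z (hball_cb hz))) i j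
  have hhc : ∀ i j, ContinuousOn (fun z => h z i j) (closedBall 0 1) :=
    fun i j => mul_entry_continuousOn (hcont_entry _ c'.contOn_p)
      (inv_entry_continuousOn (hcont_entry _ c.contOn_p) c.unit_p) i j
  -- relation on the sphere
  have hsph_cb : ∀ z : ℂ, z ∈ sphere (0:ℂ) 1 → z ∈ closedBall (0:ℂ) 1 := fun z hz =>
    sphere_subset_closedBall hz
  have hrel : ∀ z ∈ sphere (0:ℂ) 1, g (conj' z) = h z := by
    intro z hz
    have hnz : ‖z‖ = 1 := mem_sphere_zero_iff_norm.mp hz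
    have hinv : z⁻¹ = conj' z := by
      rw [Complex.inv_def]
      have : Complex.normSq z = 1 := by
        rw [Complex.normSq_eq_norm_sq]
        rw [hnz]; norm_num
      rw [this]
      simp
    have hfz := c.factor z hz
    have hfz' := c'.factor z hz
    rw [hinv] at hfz hfz'
    have hczcb := hconj_cb z (hsph_cb z hz)
    have hzcb := hsph_cb z hz
    have hdetm' : IsUnit ((c'.Fm (conj' z)).det) :=
      (Matrix.isUnit_iff_isUnit_det _).mp (c'.unit_m _ hczcb)
    have hdetp : IsUnit ((c.Fp z).det) :=
      (Matrix.isUnit_iff_isUnit_det _).mp (c.unit_p _ hzcb)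
    have hAP : c.Fm (conj' z) * c.Fp z = c'.Fm (conj' z) * c'.Fp z := by
      rw [← hfz, ← hfz']
    show (c'.Fm (conj' z))⁻¹ * c.Fm (conj' z) = c'.Fp z * (c.Fp z)⁻¹
    have hA : c.Fm (conj' z) = c'.Fm (conj' z) * c'.Fp z * (c.Fp z)⁻¹ := by
      rw [← hAP, mul_assoc, Matrix.mul_nonsing_inv _ hdetp, mul_one]
    rw [hA, ← mul_assoc, ← mul_assoc, Matrix.nonsing_inv_mul _ hdetm', one_mul]
  -- entrywise constancy
  have hconst : ∀ z ∈ closedBall (0:ℂ) 1, ∀ w ∈ closedBall (0:ℂ) 1, g z = h w := by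
    intro z hz w hw
    ext i j
    exact two_sided_const (hgd i j) (hgc i j) (hhd i j) (hhc i j)
      (fun z hz => by show g (conj' z) i j = h z i j; rw [hrel z hz]) z hz w hw
  -- conclude
  intro z hz
  have hcz := hconj_cb z hz
  have hBeq : g (conj' z) = h z := hconst (conj' z) hcz z hz
  have hdetm' : IsUnit ((c'.Fm (conj' z)).det) :=
    (Matrix.isUnit_iff_isUnit_det _).mp (c'.unit_m _ hcz)
  have hdetp : IsUnit ((c.Fp z).det) :=
    (Matrix.isUnit_iff_isUnit_det _).mp (c.unit_p _ hz)
  have h1 : c'.Fm (conj' z) * g (conj' z) = c.Fm (conj' z) := by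
    rw [hg]; simp only []
    rw [← mul_assoc, Matrix.mul_nonsing_inv _ hdetm', one_mul]
  have h2 : h z * c.Fp z = c'.Fp z := by
    rw [hh]; simp only []
    rw [mul_assoc, Matrix.nonsing_inv_mul _ hdetp, mul_one]
  calc c.Fm (conj' z) * c.Fp z
      = (c'.Fm (conj' z) * g (conj' z)) * c.Fp z := by rw [h1]
    _ = c'.Fm (conj' z) * (h z * c.Fp z) := by rw [hBeq, mul_assoc]
    _ = c'.Fm (conj' z) * c'.Fp z := by rw [h2]


lemma conj_mem_cb {z : ℂ} (hz : z ∈ closedBall (0:ℂ) 1) :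
    conj' z ∈ closedBall (0:ℂ) 1 := by
  simpa [mem_closedBall_zero_iff] using mem_closedBall_zero_iff.mp hz

lemma sphere_inv_eq_conj {z : ℂ} (hz : z ∈ sphere (0:ℂ) 1) : z⁻¹ = conj' z := by
  have hnz : ‖z‖ = 1 := mem_sphere_zero_iff_norm.mp hz
  rw [Complex.inv_def]
  have : Complex.normSq z = 1 := by
    rw [Complex.normSq_eq_norm_sq]
    rw [hnz]; norm_num
  rw [this]
  simp


/-- Extension of families.  Let `X` be a topological space and `f : 𝕋 × X → GLₙ(ℂ)`
continuous, such that around each point of `X` the functions `f(·,x)` admit canonical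
factorizations depending continuously on the parameter.  Then there is a unique continuous
invertible-valued map `fᵉ : 𝔻² × X → GLₙ(ℂ)` extending `f` which, on every neighborhood
carrying a continuous canonical factorization `f = f₋ f₊`, is given by
`fᵉ(z,x) = f₋ᵉ(z̄⁻¹,x) f₊ᵉ(z,x)` (encoded as `Fm (conj z) x * Fp z x`). -/
theorem family_extension_exists_unique {n : ℕ} (X : Type*) [TopologicalSpace X]
    (f : ℂ → X → Matrix (Fin n) (Fin n) ℂ)
    (hf : ContinuousOn (fun p : ℂ × X => f p.1 p.2) (sphere 0 1 ×ˢ Set.univ))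
    (hloc : ∀ x : X, ∃ U ∈ nhds x, ∃ Fm Fp : ℂ → X → Matrix (Fin n) (Fin n) ℂ,
      ContinuousOn (fun p : ℂ × X => Fm p.1 p.2) (closedBall 0 1 ×ˢ U) ∧
      ContinuousOn (fun p : ℂ × X => Fp p.1 p.2) (closedBall 0 1 ×ˢ U) ∧
      ∀ x' ∈ U, ∃ c : CanonicalFactorization n (fun z => f z x'),
        c.Fm = (fun z => Fm z x') ∧ c.Fp = (fun z => Fp z x')) :
    ∃! fe : closedBall (0 : ℂ) 1 → X → Matrix (Fin n) (Fin n) ℂ,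
      Continuous (fun p : closedBall (0 : ℂ) 1 × X => fe p.1 p.2) ∧
      (∀ z : closedBall (0 : ℂ) 1, (z : ℂ) ∈ sphere (0 : ℂ) 1 → ∀ x, fe z x = f z x) ∧
      (∀ z : closedBall (0 : ℂ) 1, ∀ x, IsUnit (fe z x)) ∧
      (∀ (U : Set X) (Fm Fp : ℂ → X → Matrix (Fin n) (Fin n) ℂ),
        (∀ x' ∈ U, ∃ c : CanonicalFactorization n (fun z => f z x'),
          c.Fm = (fun z => Fm z x') ∧ c.Fp = (fun z => Fp z x')) →
        ∀ x' ∈ U, ∀ z : closedBall (0 : ℂ) 1,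
          fe z x' = Fm (starRingEnd ℂ (z : ℂ)) x' * Fp (z : ℂ) x') := by
  classical
  have cf : ∀ x : X, CanonicalFactorization n (fun z => f z x) := fun x =>
    ((hloc x).choose_spec.2.choose_spec.choose_spec.2.2 x
      (mem_of_mem_nhds (hloc x).choose_spec.1)).choose
  set fe : closedBall (0 : ℂ) 1 → X → Matrix (Fin n) (Fin n) ℂ :=
    fun z x => (cf x).Fm (conj' (z : ℂ)) * (cf x).Fp (z : ℂ) with hfe
  have hform : ∀ (U : Set X) (Fm Fp : ℂ → X → Matrix (Fin n) (Fin n) ℂ),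
      (∀ x' ∈ U, ∃ c : CanonicalFactorization n (fun z => f z x'),
        c.Fm = (fun z => Fm z x') ∧ c.Fp = (fun z => Fp z x')) →
      ∀ x' ∈ U, ∀ z : closedBall (0 : ℂ) 1,
        fe z x' = Fm (starRingEnd ℂ (z : ℂ)) x' * Fp (z : ℂ) x' := by
    intro U Fm Fp hfac x' hx' z
    obtain ⟨c, hcm, hcp⟩ := hfac x' hx'
    have hk := key_unique (cf x') c (z : ℂ) z.2
    rw [hfe]
    simp only []
    rw [hk, hcm, hcp]
  refine ⟨fe, ⟨?_, ?_, ?_, hform⟩, ?_⟩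
  · -- continuity
    rw [continuous_iff_continuousAt]
    rintro ⟨z₀, x₀⟩
    obtain ⟨U, hU, Fm, Fp, hFmc, hFpc, hfac⟩ := hloc x₀
    set S : Set (ℂ × X) := closedBall 0 1 ×ˢ U with hS
    have hφ : Continuous (fun p : ℂ × X => (conj' p.1, p.2)) :=
      (Complex.continuous_conj.comp continuous_fst).prodMk continuous_snd
    have hφmaps : Set.MapsTo (fun p : ℂ × X => (conj' p.1, p.2)) S S := by
      rintro ⟨w, x⟩ ⟨hw, hx⟩
      exact ⟨conj_mem_cb hw, hx⟩
    have hFm' : ContinuousOn (fun p : ℂ × X => Fm (conj' p.1) p.2) S :=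
      hFmc.comp hφ.continuousOn hφmaps
    have hK : ContinuousOn (fun p : ℂ × X => Fm (conj' p.1) p.2 * Fp p.1 p.2) S := by
      refine continuousOn_pi.mpr ?_; intro i
      rw [continuousOn_pi]; intro j
      show ContinuousOn (fun p : ℂ × X => (Fm (conj' p.1) p.2 * Fp p.1 p.2) i j) S
      simp only [Matrix.mul_apply]
      apply continuousOn_finset_sum
      intro k _
      have h1 : ContinuousOn (fun p : ℂ × X => Fm (conj' p.1) p.2 i k) S := by
        have := ((continuous_apply k).comp (continuous_apply i)).comp_continuousOn hFm'
        exact this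
      have h2 : ContinuousOn (fun p : ℂ × X => Fp p.1 p.2 k j) S := by
        have := ((continuous_apply j).comp (continuous_apply k)).comp_continuousOn hFpc
        exact this
      exact h1.mul h2
    set ι : (closedBall (0 : ℂ) 1) × X → ℂ × X := fun q => ((q.1 : ℂ), q.2) with hι
    have hιc : Continuous ι := (continuous_subtype_val.comp continuous_fst).prodMk continuous_snd
    have hmemU : ∀ᶠ q : (closedBall (0 : ℂ) 1) × X in nhds (z₀, x₀), q.2 ∈ U := by
      have := (continuous_snd.continuousAt
        (x := ((z₀, x₀) : (closedBall (0 : ℂ) 1) × X))).preimage_mem_nhds hU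
      filter_upwards [this] with q hq using hq
    have hmemS : ∀ᶠ q : (closedBall (0 : ℂ) 1) × X in nhds (z₀, x₀), ι q ∈ S := by
      filter_upwards [hmemU] with q hq
      exact ⟨q.1.2, hq⟩
    have hι₀ : ι (z₀, x₀) ∈ S := ⟨z₀.2, mem_of_mem_nhds hU⟩
    have hten : Filter.Tendsto ι (nhds (z₀, x₀)) (nhdsWithin (ι (z₀, x₀)) S) := by
      rw [tendsto_nhdsWithin_iff]
      exact ⟨hιc.continuousAt, hmemS⟩
    have hKι : ContinuousAt (fun q => Fm (conj' (ι q).1) (ι q).2 * Fp (ι q).1 (ι q).2)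
        (z₀, x₀) := (hK _ hι₀).tendsto.comp hten
    apply hKι.congr
    filter_upwards [hmemU] with q hq
    exact (hform U Fm Fp hfac q.2 hq q.1).symm
  · -- extension of f
    intro z hz x
    have hfact := (cf x).factor (z : ℂ) hz
    have hinv := sphere_inv_eq_conj hz
    rw [hfe]
    simp only []
    rw [← hinv, ← hfact]
  · -- invertibility
    intro z x
    exact ((cf x).unit_m _ (conj_mem_cb z.2)).mul ((cf x).unit_p _ z.2)
  · -- uniqueness
    rintro g ⟨hgc, hgext, hgunit, hgform⟩
    funext z x
    obtain ⟨U, hU, Fm, Fp, _, _, hfac⟩ := hloc x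
    have h1 := hgform U Fm Fp hfac x (mem_of_mem_nhds hU) z
    have h2 := hform U Fm Fp hfac x (mem_of_mem_nhds hU) z
    rw [h1, ← h2]
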